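/- The spectral density f is nonnegative, integrable on ℝ, and ∫_ℝ f(λ) dλ = 1. -/

import Mathlib

open Real Filter Topology MeasureTheory
open Set

/-- The modified Bessel function of the second kind
`K_ν(z) = (1/2) ∫_0^∞ s^{ν−1} exp(−(z/2)(s + 1/s)) ds`. -/
noncomputable def besselK (ν z : ℝ) : ℝ :=
  (1 / 2) * ∫ s in Set.Ioi (0 : ℝ), s ^ (ν - 1) * Real.exp (-(z / 2) * (s + 1 / s))

lemma besselK_nonneg (ν z : ℝ) : 0 ≤ besselK ν z := by
  unfold besselK
  apply mul_nonneg (by norm_num)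
  apply setIntegral_nonneg measurableSet_Ioi
  intro s hs
  exact mul_nonneg (rpow_nonneg (le_of_lt hs) _) (exp_pos _).le


lemma measurable_besselK (ν : ℝ) : Measurable (besselK ν) := by
  apply Measurable.const_mul
  have h : StronglyMeasurable
      (fun p : ℝ × ℝ => p.2 ^ (ν - 1) * Real.exp (-(p.1 / 2) * (p.2 + 1 / p.2))) := by
    apply Measurable.stronglyMeasurable
    fun_prop
  exact h.integral_prod_right'.measurable

lemma besselK_eq (ν : ℝ) {z : ℝ} (hz : 0 < z) :
    besselK ν z
      = 2 ^ (-ν - 1) * z ^ ν *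
        ∫ u in Ioi (0 : ℝ), u ^ (-ν - 1) * Real.exp (-(u + z ^ 2 / (4 * u))) := by
  have hz' : z ≠ 0 := hz.ne'
  -- Step 1: inversion s ↦ s⁻¹
  have step1 : (∫ s in Ioi (0 : ℝ), s ^ (ν - 1) * Real.exp (-(z / 2) * (s + 1 / s)))
      = ∫ x in Ioi (0 : ℝ), x ^ (-ν - 1) * Real.exp (-(z / 2) * (x + 1 / x)) := by
    rw [← integral_comp_rpow_Ioi
      (fun s => s ^ (ν - 1) * Real.exp (-(z / 2) * (s + 1 / s))) (p := -1) (by norm_num)]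
    refine setIntegral_congr_fun measurableSet_Ioi (fun x hx => ?_)
    have hx0 : (0:ℝ) < x := hx
    simp only [rpow_neg_one, abs_neg, abs_one, one_mul, smul_eq_mul,
      inv_rpow hx0.le, ← rpow_neg hx0.le, one_div, inv_inv]
    rw [← mul_assoc, ← rpow_add hx0]
    rw [add_comm x⁻¹ x]
    norm_num
    ring_nf
  -- Step 2: scaling x = (2/z) * u
  have h2z : (0:ℝ) < 2 / z := by positivity
  have key := integral_comp_mul_left_Ioi
    (fun x => x ^ (-ν - 1) * Real.exp (-(z / 2) * (x + 1 / x))) 0 h2z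
  rw [mul_zero, smul_eq_mul] at key
  have key2 : (∫ x in Ioi (0 : ℝ), x ^ (-ν - 1) * Real.exp (-(z / 2) * (x + 1 / x)))
      = (2 / z) * ∫ x in Ioi (0 : ℝ),
          (2 / z * x) ^ (-ν - 1) * Real.exp (-(z / 2) * (2 / z * x + 1 / (2 / z * x))) := by
    rw [key]; field_simp
  have step2 : (∫ x in Ioi (0 : ℝ),
          (2 / z * x) ^ (-ν - 1) * Real.exp (-(z / 2) * (2 / z * x + 1 / (2 / z * x))))
      = (2 / z) ^ (-ν - 1) *
        ∫ u in Ioi (0 : ℝ), u ^ (-ν - 1) * Real.exp (-(u + z ^ 2 / (4 * u))) := by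
    rw [← integral_const_mul]
    refine setIntegral_congr_fun measurableSet_Ioi (fun u hu => ?_)
    have hu0 : (0:ℝ) < u := hu
    rw [mul_rpow h2z.le hu0.le, mul_assoc]
    congr 2
    congr 1
    field_simp
    ring
  have e1 : (2 / z : ℝ) ^ (-ν - 1) = 2 ^ (-ν - 1) * (z ^ ν * z) := by
    rw [div_rpow (by norm_num) hz.le, div_eq_mul_inv, ← rpow_neg hz.le]
    congr 1
    rw [show -(-ν - 1) = ν + 1 by ring, rpow_add hz, rpow_one]
  unfold besselK
  rw [step1, key2, step2, e1]
  set I := ∫ u in Ioi (0 : ℝ), u ^ (-ν - 1) * Real.exp (-(u + z ^ 2 / (4 * u))) with hI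
  clear_value I
  field_simp

section core
variable {ν : ℝ} (h1 : -(1/2 : ℝ) < ν) (h2 : ν < 0)

-- the two-variable kernel
noncomputable def Phi (ν : ℝ) (l u : ℝ) : ℝ :=
  l ^ (2*ν) * (u ^ (-ν - 1) * Real.exp (-(u + l^2/(4*u))))

lemma measurable_Phi (ν : ℝ) : Measurable (Function.uncurry (Phi ν)) := by
  unfold Phi Function.uncurry
  fun_prop

lemma inner_lam_integrable (hq : -1 < 2*ν) {u : ℝ} (hu : 0 < u) :
    IntegrableOn (fun l => Phi ν l u) (Ioi (0:ℝ)) := by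
  have h := (integrableOn_rpow_mul_exp_neg_mul_sq (b := 1/(4*u)) (by positivity) hq).const_mul
    (u ^ (-ν - 1) * Real.exp (-u))
  refine h.congr ((ae_restrict_mem measurableSet_Ioi).mono fun l hl => ?_)
  simp only [Phi]
  rw [show -(u + l^2/(4*u)) = -u + (-(1/(4*u)) * l^2) by field_simp; try ring, Real.exp_add]
  ring

lemma inner_lam_value (hq : -1 < 2*ν) {u : ℝ} (hu : 0 < u) :
    ∫ l in Ioi (0:ℝ), Phi ν l u
      = u ^ (-ν - 1) * Real.exp (-u) * ((4*u) ^ (ν + 1/2) * ((1/2) * Real.Gamma (ν + 1/2))) := by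
  have e : ∀ l ∈ Ioi (0:ℝ), Phi ν l u
      = (u ^ (-ν - 1) * Real.exp (-u)) * (l ^ (2*ν) * Real.exp (-(1/(4*u)) * l^2)) := by
    intro l hl
    unfold Phi
    rw [show -(u + l^2/(4*u)) = -u + (-(1/(4*u)) * l^2) by field_simp; try ring, Real.exp_add]
    ring
  rw [setIntegral_congr_fun measurableSet_Ioi e, integral_const_mul]
  have hb : (0:ℝ) < 1/(4*u) := by positivity
  have e2 : ∀ l ∈ Ioi (0:ℝ),
      l ^ (2*ν) * Real.exp (-(1/(4*u)) * l^2) = l ^ (2*ν) * Real.exp (-(1/(4*u)) * l^((2:ℕ):ℝ)) := by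
    intro l hl
    rw [rpow_natCast]
  rw [setIntegral_congr_fun measurableSet_Ioi e2,
    integral_rpow_mul_exp_neg_mul_rpow (by norm_num) hq hb]
  have e3 : ((1:ℝ)/(4*u)) ^ (-(2*ν+1)/((2:ℕ):ℝ)) = (4*u) ^ (ν + 1/2) := by
    rw [show ((2:ℕ):ℝ) = (2:ℝ) by norm_num, one_div, ← rpow_neg_one (4*u),
      ← rpow_mul (by positivity : (0:ℝ) ≤ 4*u)]
    congr 1
    ring
  rw [e3, show (2*ν+1)/((2:ℕ):ℝ) = ν + 1/2 by push_cast; ring]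
  push_cast
  ring
end core

section core2
variable {ν : ℝ}

lemma Phi_nonneg {l u : ℝ} (hl : 0 ≤ l) (hu : 0 ≤ u) : 0 ≤ Phi ν l u :=
  mul_nonneg (rpow_nonneg hl _) (mul_nonneg (rpow_nonneg hu _) (Real.exp_pos _).le)

lemma outer_integrand_eq {u : ℝ} (hu : 0 < u) :
    u ^ (-ν - 1) * Real.exp (-u) * ((4*u) ^ (ν + 1/2) * ((1/2) * Real.Gamma (ν + 1/2)))
      = (4:ℝ) ^ (ν + 1/2) * ((1/2) * Real.Gamma (ν + 1/2)) *
          (Real.exp (-u) * u ^ ((1/2:ℝ) - 1)) := by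
  have key : u ^ ((1/2:ℝ) - 1) = u ^ (-ν - 1) * u ^ (ν + 1/2) := by
    rw [← rpow_add hu]; congr 1; ring
  rw [mul_rpow (by norm_num) hu.le, key]; ring

lemma outer_integrable : IntegrableOn
    (fun u => u ^ (-ν - 1) * Real.exp (-u) *
      ((4*u) ^ (ν + 1/2) * ((1/2) * Real.Gamma (ν + 1/2)))) (Ioi (0:ℝ)) := by
  refine ((Real.GammaIntegral_convergent one_half_pos).const_mul
    ((4:ℝ) ^ (ν + 1/2) * ((1/2) * Real.Gamma (ν + 1/2)))).congr
    ((ae_restrict_mem measurableSet_Ioi).mono fun u hu => ?_)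
  exact (outer_integrand_eq hu).symm

lemma outer_value :
    (∫ u in Ioi (0:ℝ), u ^ (-ν - 1) * Real.exp (-u) *
        ((4*u) ^ (ν + 1/2) * ((1/2) * Real.Gamma (ν + 1/2))))
      = 2 ^ (2*ν) * Real.sqrt π * Real.Gamma (ν + 1/2) := by
  rw [setIntegral_congr_fun measurableSet_Ioi (fun u hu => outer_integrand_eq hu),
    integral_const_mul, ← Real.Gamma_eq_integral one_half_pos, Real.Gamma_one_half_eq]
  have h4 : (4:ℝ) = (2:ℝ) ^ (2:ℝ) := by
    rw [Real.rpow_two]; norm_num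
  rw [h4, ← rpow_mul (by norm_num : (0:ℝ) ≤ 2), show (2:ℝ) * (ν + 1/2) = 2*ν + 1 by ring,
    rpow_add (by norm_num : (0:ℝ) < 2), rpow_one]
  ring
end core2

section core3
variable {ν : ℝ}

lemma double_lintegral (h1 : -(1/2:ℝ) < ν) :
    (∫⁻ l in Ioi (0:ℝ), ∫⁻ u in Ioi (0:ℝ), ENNReal.ofReal (Phi ν l u))
      = ENNReal.ofReal (2 ^ (2*ν) * Real.sqrt π * Real.Gamma (ν + 1/2)) := by
  have hq : -1 < 2*ν := by linarith
  have hΓ : (0:ℝ) ≤ Real.Gamma (ν + 1/2) := Real.Gamma_nonneg_of_nonneg (by linarith)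
  rw [lintegral_lintegral_swap (((measurable_Phi ν).ennreal_ofReal).aemeasurable)]
  have step : ∀ u ∈ Ioi (0:ℝ),
      (∫⁻ l in Ioi (0:ℝ), ENNReal.ofReal (Phi ν l u))
        = ENNReal.ofReal (u ^ (-ν - 1) * Real.exp (-u) *
            ((4*u) ^ (ν + 1/2) * ((1/2) * Real.Gamma (ν + 1/2)))) := by
    intro u hu
    rw [← ofReal_integral_eq_lintegral_ofReal (inner_lam_integrable hq hu)
      ((ae_restrict_mem measurableSet_Ioi).mono fun l hl =>
        Phi_nonneg (le_of_lt hl) (le_of_lt hu)),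
      inner_lam_value hq hu]
  rw [setLIntegral_congr_fun measurableSet_Ioi step]
  rw [← ofReal_integral_eq_lintegral_ofReal outer_integrable
    ((ae_restrict_mem measurableSet_Ioi).mono fun u hu =>
      mul_nonneg (mul_nonneg (rpow_nonneg (le_of_lt hu) _) (Real.exp_pos _).le)
        (mul_nonneg (rpow_nonneg (by have : (0:ℝ) < u := hu; positivity) _) (mul_nonneg (by norm_num) hΓ))),
    outer_value]

lemma lintegral_Ioi_besselK (h1 : -(1/2:ℝ) < ν) (h2 : ν < 0) :
    (∫⁻ l in Ioi (0:ℝ), ENNReal.ofReal (besselK ν l * l ^ ν))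
      = ENNReal.ofReal (2 ^ (-ν-1) * (2 ^ (2*ν) * Real.sqrt π * Real.Gamma (ν + 1/2))) := by
  have hq : -1 < 2*ν := by linarith
  have hD := double_lintegral (ν := ν) h1
  have hm : Measurable (fun l => ∫⁻ u in Ioi (0:ℝ), ENNReal.ofReal (Phi ν l u)) :=
    Measurable.lintegral_prod_right ((measurable_Phi ν).ennreal_ofReal)
  have hfin : ∀ᵐ l ∂(volume.restrict (Ioi (0:ℝ))),
      (∫⁻ u in Ioi (0:ℝ), ENNReal.ofReal (Phi ν l u)) < ⊤ := by
    apply ae_lt_top hm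
    rw [hD]; exact ENNReal.ofReal_ne_top
  have key : ∀ᵐ l ∂(volume.restrict (Ioi (0:ℝ))),
      ENNReal.ofReal (besselK ν l * l ^ ν)
        = ENNReal.ofReal ((2:ℝ) ^ (-ν-1)) * ∫⁻ u in Ioi (0:ℝ), ENNReal.ofReal (Phi ν l u) := by
    filter_upwards [ae_restrict_mem measurableSet_Ioi, hfin] with l hl hlt
    have hl0 : (0:ℝ) < l := hl
    have hmeas : AEStronglyMeasurable (fun u => Phi ν l u) (volume.restrict (Ioi (0:ℝ))) :=
      ((measurable_Phi ν).of_uncurry_left).aestronglyMeasurable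
    have hnn : 0 ≤ᵐ[volume.restrict (Ioi (0:ℝ))] fun u => Phi ν l u :=
      (ae_restrict_mem measurableSet_Ioi).mono fun u hu => Phi_nonneg hl0.le (le_of_lt hu)
    have hint : Integrable (fun u => Phi ν l u) (volume.restrict (Ioi (0:ℝ))) := by
      refine ⟨hmeas, ?_⟩
      rw [hasFiniteIntegral_iff_ofReal hnn]
      exact hlt
    have hsplit : (∫ u in Ioi (0:ℝ), Phi ν l u)
        = l^(2*ν) * ∫ u in Ioi (0:ℝ), u^(-ν-1) * Real.exp (-(u + l^2/(4*u))) := by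
      simp only [Phi]; rw [integral_const_mul]
    have hll : l ^ ν * l ^ ν = l ^ (2*ν) := by
      rw [← rpow_add hl0]; congr 1; ring
    have heq : besselK ν l * l ^ ν = 2 ^ (-ν-1) * ∫ u in Ioi (0:ℝ), Phi ν l u := by
      rw [hsplit, besselK_eq ν hl0, ← hll]; ring
    rw [heq, ENNReal.ofReal_mul (by positivity : (0:ℝ) ≤ 2^(-ν-1)),
      ofReal_integral_eq_lintegral_ofReal hint hnn]
  rw [lintegral_congr_ae key, lintegral_const_mul' _ _ ENNReal.ofReal_ne_top, hD,
    ← ENNReal.ofReal_mul (by positivity)]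
end core3


section core4
variable {ν : ℝ}

lemma g_nonneg (l : ℝ) : 0 ≤ besselK ν |l| * |l| ^ ν :=
  mul_nonneg (besselK_nonneg _ _) (rpow_nonneg (abs_nonneg _) _)

lemma g_measurable : Measurable (fun l : ℝ => besselK ν |l| * |l| ^ ν) := by
  have h1 : Measurable fun l : ℝ => |l| := measurable_abs
  exact ((measurable_besselK ν).comp h1).mul (h1.pow_const ν)

lemma lintegral_g (h1 : -(1/2:ℝ) < ν) (h2 : ν < 0) :
    (∫⁻ l : ℝ, ENNReal.ofReal (besselK ν |l| * |l| ^ ν))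
      = ENNReal.ofReal (2 ^ ν * Real.sqrt π * Real.Gamma (ν + 1/2)) := by
  set f : ℝ → ENNReal := fun l => ENNReal.ofReal (besselK ν |l| * |l| ^ ν) with hf
  have hT := lintegral_Ioi_besselK h1 h2
  have part1 : (∫⁻ l in Ioi (0:ℝ), f l)
      = ENNReal.ofReal (2 ^ (-ν-1) * (2 ^ (2*ν) * Real.sqrt π * Real.Gamma (ν + 1/2))) := by
    rw [← hT]
    refine setLIntegral_congr_fun measurableSet_Ioi (fun l hl => ?_)
    rw [hf]; simp only; rw [abs_of_pos hl]
  have part2 : (∫⁻ l in Iic (0:ℝ), f l) = ∫⁻ l in Ioi (0:ℝ), f l := by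
    have hmp := (Measure.measurePreserving_neg (volume : Measure ℝ)).setLIntegral_comp_preimage_emb
      (Homeomorph.neg ℝ).measurableEmbedding f (Iic 0)
    have hpre : (Neg.neg ⁻¹' (Iic (0:ℝ))) = Ici 0 := by
      ext x; simp
    rw [hpre] at hmp
    rw [← hmp]
    have : ∀ x : ℝ, f (-x) = f x := by
      intro x; rw [hf]; simp only [abs_neg]
    simp_rw [this]
    exact (setLIntegral_congr Ioi_ae_eq_Ici).symm
  have split : (∫⁻ l : ℝ, f l) = (∫⁻ l in Ioi (0:ℝ), f l) + ∫⁻ l in Iic (0:ℝ), f l := by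
    rw [← lintegral_add_compl f (measurableSet_Ioi (a := (0:ℝ))), compl_Ioi]
  have hΓ : (0:ℝ) ≤ Real.Gamma (ν + 1/2) := Real.Gamma_nonneg_of_nonneg (by linarith)
  have hC : (0:ℝ) ≤ 2 ^ (-ν-1) * (2 ^ (2*ν) * Real.sqrt π * Real.Gamma (ν + 1/2)) :=
    mul_nonneg (rpow_nonneg (by norm_num) _)
      (mul_nonneg (mul_nonneg (rpow_nonneg (by norm_num) _) (Real.sqrt_nonneg _)) hΓ)
  rw [split, part1, part2, part1, ← ENNReal.ofReal_add hC hC]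
  congr 1
  have e1 : (2:ℝ)^(-ν-1) * (2:ℝ)^(2*ν) = (2:ℝ)^(ν-1) := by
    rw [← rpow_add (by norm_num : (0:ℝ) < 2)]; congr 1; ring
  have e2 : (2:ℝ)^(ν-1) + (2:ℝ)^(ν-1) = (2:ℝ)^ν := by
    rw [show ν = (ν-1)+1 by ring, rpow_add (by norm_num : (0:ℝ) < 2), rpow_one]
    ring_nf
  calc 2 ^ (-ν-1) * (2 ^ (2*ν) * Real.sqrt π * Real.Gamma (ν + 1/2))
        + 2 ^ (-ν-1) * (2 ^ (2*ν) * Real.sqrt π * Real.Gamma (ν + 1/2))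
      = ((2:ℝ)^(ν-1) + (2:ℝ)^(ν-1)) * Real.sqrt π * Real.Gamma (ν + 1/2) := by
        rw [← e1]; ring
    _ = 2 ^ ν * Real.sqrt π * Real.Gamma (ν + 1/2) := by rw [e2]

lemma besselK_core (h1 : -(1/2:ℝ) < ν) (h2 : ν < 0) :
    Integrable (fun l : ℝ => besselK ν |l| * |l| ^ ν) ∧
      ∫ l : ℝ, besselK ν |l| * |l| ^ ν = 2 ^ ν * Real.sqrt π * Real.Gamma (ν + 1/2) := by
  have hΓ : (0:ℝ) ≤ Real.Gamma (ν + 1/2) := Real.Gamma_nonneg_of_nonneg (by linarith)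
  have hnn : 0 ≤ᵐ[volume] fun l : ℝ => besselK ν |l| * |l| ^ ν :=
    Filter.Eventually.of_forall g_nonneg
  have hint : Integrable (fun l : ℝ => besselK ν |l| * |l| ^ ν) := by
    refine ⟨g_measurable.aestronglyMeasurable, ?_⟩
    rw [hasFiniteIntegral_iff_ofReal hnn, lintegral_g h1 h2]
    exact ENNReal.ofReal_lt_top
  refine ⟨hint, ?_⟩
  rw [integral_eq_lintegral_of_nonneg_ae hnn g_measurable.aestronglyMeasurable,
    lintegral_g h1 h2, ENNReal.toReal_ofReal (by positivity)]
end core4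

lemma core_κ {κ : ℝ} (hκ : κ ∈ Set.Ioo (0:ℝ) 1) :
    Integrable (fun l : ℝ => besselK ((κ-1)/2) |l| * |l| ^ ((κ-1)/2)) ∧
      ∫ l : ℝ, besselK ((κ-1)/2) |l| * |l| ^ ((κ-1)/2)
        = 2 ^ ((κ-1)/2) * Real.sqrt π * Real.Gamma (κ/2) := by
  obtain ⟨h0, h1⟩ := hκ
  obtain ⟨hi, hv⟩ := besselK_core (ν := (κ-1)/2) (by linarith) (by linarith)
  refine ⟨hi, ?_⟩
  rw [hv]
  congr 2
  ring

lemma coeff_mul {κ : ℝ} (hκ : κ ∈ Set.Ioo (0:ℝ) 1) :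
    (2:ℝ) ^ ((1 - κ)/2) / (Real.sqrt π * Real.Gamma (κ/2)) *
      (2 ^ ((κ-1)/2) * Real.sqrt π * Real.Gamma (κ/2)) = 1 := by
  have h2 : (2:ℝ)^((1-κ)/2) * 2^((κ-1)/2) = 1 := by
    rw [← rpow_add (by norm_num : (0:ℝ) < 2), show (1-κ)/2 + (κ-1)/2 = 0 by ring, rpow_zero]
  have hs : Real.sqrt π ≠ 0 := by positivity
  have hΓ : Real.Gamma (κ/2) ≠ 0 := (Real.Gamma_pos_of_pos (by linarith [hκ.1])).ne'
  rw [div_mul_eq_mul_div, div_eq_one_iff_eq (mul_ne_zero hs hΓ)]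
  linear_combination (Real.sqrt π * Real.Gamma (κ/2)) * h2


/-- The spectral density
`f(λ) = (c_1(κ_0)/2) A_0 K_{(κ_0−1)/2}(|λ|)|λ|^{(κ_0−1)/2}
  + ∑_{j=1}^n (c_1(κ_j)/2) A_j (K_{(κ_j−1)/2}(|λ+w_j|)|λ+w_j|^{(κ_j−1)/2}
                              + K_{(κ_j−1)/2}(|λ−w_j|)|λ−w_j|^{(κ_j−1)/2})`,
with `c_1(κ_0) = 2·2^{(1−κ_0)/2}/(√π Γ(κ_0/2))` and
`c_1(κ_j) = 2^{(1−κ_j)/2}/(√π Γ(κ_j/2))` for `j ≥ 1`. -/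
noncomputable def specDensity (n : ℕ) (w κ A : ℕ → ℝ) (lam : ℝ) : ℝ :=
  2 * (2 : ℝ) ^ ((1 - κ 0) / 2) / (Real.sqrt Real.pi * Real.Gamma (κ 0 / 2)) / 2 * A 0 *
      besselK ((κ 0 - 1) / 2) |lam| * |lam| ^ ((κ 0 - 1) / 2) +
    ∑ j ∈ Finset.Icc 1 n,
      (2 : ℝ) ^ ((1 - κ j) / 2) / (Real.sqrt Real.pi * Real.Gamma (κ j / 2)) / 2 * A j *
        (besselK ((κ j - 1) / 2) |lam + w j| * |lam + w j| ^ ((κ j - 1) / 2) +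
          besselK ((κ j - 1) / 2) |lam - w j| * |lam - w j| ^ ((κ j - 1) / 2))

/-- The spectral density `f` is nonnegative, integrable on `ℝ`, and `∫_ℝ f(λ) dλ = 1`. -/
theorem specDensity_nonneg_integrable_integral_one (n : ℕ) (hn : 1 ≤ n) (w κ A : ℕ → ℝ)
    (hw0 : w 0 = 0) (hw : ∀ j ∈ Finset.Icc 1 n, 0 < w j)
    (hκ : ∀ j ∈ Finset.range (n + 1), κ j ∈ Set.Ioo (0 : ℝ) 1)
    (hA : ∀ j ∈ Finset.range (n + 1), 0 ≤ A j)
    (hAsum : ∑ j ∈ Finset.range (n + 1), A j = 1) :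
    (∀ lam : ℝ, 0 ≤ specDensity n w κ A lam) ∧
      MeasureTheory.Integrable (specDensity n w κ A) ∧
      ∫ lam : ℝ, specDensity n w κ A lam = 1 := by
  have hmem : ∀ j ∈ Finset.Icc 1 n, j ∈ Finset.range (n+1) := by
    intro j hj
    rw [Finset.mem_range]
    have := (Finset.mem_Icc.mp hj).2
    omega
  have h0mem : (0:ℕ) ∈ Finset.range (n+1) := by simp
  have hΓpos : ∀ j ∈ Finset.range (n+1), 0 < Real.Gamma (κ j / 2) := fun j hj =>
    Real.Gamma_pos_of_pos (by have := (hκ j hj).1; linarith)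
  -- coefficient nonnegativity
  have hc0 : 0 ≤ 2 * (2:ℝ) ^ ((1 - κ 0)/2) / (Real.sqrt π * Real.Gamma (κ 0/2)) / 2 :=
    div_nonneg (div_nonneg (by positivity)
      (mul_nonneg (Real.sqrt_nonneg _) (hΓpos 0 h0mem).le)) (by norm_num)
  have hcj : ∀ j ∈ Finset.Icc 1 n,
      0 ≤ (2:ℝ) ^ ((1 - κ j)/2) / (Real.sqrt π * Real.Gamma (κ j/2)) / 2 := fun j hj =>
    div_nonneg (div_nonneg (rpow_nonneg (by norm_num) _)
      (mul_nonneg (Real.sqrt_nonneg _) (hΓpos j (hmem j hj)).le)) (by norm_num)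
  -- integrability of each term
  have hint0 : Integrable (fun lam : ℝ =>
      2 * (2:ℝ) ^ ((1 - κ 0)/2) / (Real.sqrt π * Real.Gamma (κ 0/2)) / 2 * A 0 *
        besselK ((κ 0 - 1)/2) |lam| * |lam| ^ ((κ 0 - 1)/2)) := by
    have h := (core_κ (hκ 0 h0mem)).1.const_mul
      (2 * (2:ℝ) ^ ((1 - κ 0)/2) / (Real.sqrt π * Real.Gamma (κ 0/2)) / 2 * A 0)
    exact h.congr (Filter.Eventually.of_forall fun l => by simp only; ring)
  have hintj : ∀ j ∈ Finset.Icc 1 n, Integrable (fun lam : ℝ =>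
      (2:ℝ) ^ ((1 - κ j)/2) / (Real.sqrt π * Real.Gamma (κ j/2)) / 2 * A j *
        (besselK ((κ j - 1)/2) |lam + w j| * |lam + w j| ^ ((κ j - 1)/2) +
          besselK ((κ j - 1)/2) |lam - w j| * |lam - w j| ^ ((κ j - 1)/2))) := by
    intro j hj
    have hbase := (core_κ (hκ j (hmem j hj))).1
    exact ((hbase.comp_add_right (w j)).add (hbase.comp_sub_right (w j))).const_mul _
  refine ⟨?_, ?_, ?_⟩
  · intro lam
    unfold specDensity
    apply add_nonneg
    · exact mul_nonneg (mul_nonneg (mul_nonneg hc0 (hA 0 h0mem)) (besselK_nonneg _ _))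
        (rpow_nonneg (abs_nonneg _) _)
    · refine Finset.sum_nonneg fun j hj => ?_
      exact mul_nonneg (mul_nonneg (hcj j hj) (hA j (hmem j hj)))
        (add_nonneg (mul_nonneg (besselK_nonneg _ _) (rpow_nonneg (abs_nonneg _) _))
          (mul_nonneg (besselK_nonneg _ _) (rpow_nonneg (abs_nonneg _) _)))
  · unfold specDensity
    exact hint0.add (integrable_finset_sum _ hintj)
  · unfold specDensity
    rw [integral_add hint0 (integrable_finset_sum _ hintj), integral_finset_sum _ hintj]
    have hval0 : (∫ lam : ℝ, 2 * (2:ℝ) ^ ((1 - κ 0)/2) / (Real.sqrt π * Real.Gamma (κ 0/2)) / 2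
        * A 0 * besselK ((κ 0 - 1)/2) |lam| * |lam| ^ ((κ 0 - 1)/2)) = A 0 := by
      have e : (fun lam : ℝ => 2 * (2:ℝ) ^ ((1 - κ 0)/2) / (Real.sqrt π * Real.Gamma (κ 0/2)) / 2
          * A 0 * besselK ((κ 0 - 1)/2) |lam| * |lam| ^ ((κ 0 - 1)/2))
          = fun lam : ℝ => 2 * (2:ℝ) ^ ((1 - κ 0)/2) / (Real.sqrt π * Real.Gamma (κ 0/2)) / 2
            * A 0 * (besselK ((κ 0 - 1)/2) |lam| * |lam| ^ ((κ 0 - 1)/2)) := by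
        funext lam; ring
      rw [e, integral_const_mul, (core_κ (hκ 0 h0mem)).2]
      have := coeff_mul (hκ 0 h0mem)
      have h22 : 2 * (2:ℝ) ^ ((1 - κ 0)/2) / (Real.sqrt π * Real.Gamma (κ 0/2)) / 2
          = (2:ℝ) ^ ((1 - κ 0)/2) / (Real.sqrt π * Real.Gamma (κ 0/2)) := by ring
      rw [h22]
      linear_combination A 0 * this
    have hvalj : ∀ j ∈ Finset.Icc 1 n, (∫ lam : ℝ,
        (2:ℝ) ^ ((1 - κ j)/2) / (Real.sqrt π * Real.Gamma (κ j/2)) / 2 * A j *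
          (besselK ((κ j - 1)/2) |lam + w j| * |lam + w j| ^ ((κ j - 1)/2) +
            besselK ((κ j - 1)/2) |lam - w j| * |lam - w j| ^ ((κ j - 1)/2))) = A j := by
      intro j hj
      have hbase := (core_κ (hκ j (hmem j hj))).1
      rw [integral_const_mul,
        integral_add (hbase.comp_add_right (w j)) (hbase.comp_sub_right (w j)),
        show (∫ a : ℝ, besselK ((κ j - 1)/2) |a + w j| * |a + w j| ^ ((κ j - 1)/2))
            = ∫ a : ℝ, besselK ((κ j - 1)/2) |a| * |a| ^ ((κ j - 1)/2) from
          integral_add_right_eq_self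
            (fun l : ℝ => besselK ((κ j - 1)/2) |l| * |l| ^ ((κ j - 1)/2)) (w j),
        show (∫ a : ℝ, besselK ((κ j - 1)/2) |a - w j| * |a - w j| ^ ((κ j - 1)/2))
            = ∫ a : ℝ, besselK ((κ j - 1)/2) |a| * |a| ^ ((κ j - 1)/2) from
          integral_sub_right_eq_self
            (fun l : ℝ => besselK ((κ j - 1)/2) |l| * |l| ^ ((κ j - 1)/2)) (w j),
        (core_κ (hκ j (hmem j hj))).2]
      have := coeff_mul (hκ j (hmem j hj))
      linear_combination A j * this
    rw [hval0, Finset.sum_congr rfl hvalj]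
    have hsplit : Finset.range (n+1) = insert 0 (Finset.Icc 1 n) := by
      ext j
      simp only [Finset.mem_range, Finset.mem_insert, Finset.mem_Icc]
      omega
    rw [hsplit, Finset.sum_insert (by simp)] at hAsum
    exact hAsum
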